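/- An isometry in the Calkin algebra B(ℓ²)/K(ℓ²) need not lift to an isometry in B(ℓ²); consequently the Toeplitz algebra T is not W*-C*-projective. Also, since Mₙ(ℂ) (n ≥ 2) admits no unital *-homomorphism to ℂ, the identity map Mₙ(ℂ) → Mₙ(ℂ) does not lift through the surjection Mₙ(ℂ) ⊕ ℂ → Mₙ(ℂ), so Mₙ(ℂ) is not unitally W*-C*-projective. -/

import Mathlib

noncomputable section ShiftOps

local notation "E2" => lp (fun _ : ℕ => ℂ) 2

def fsh (f : ℕ → ℂ) : ℕ → ℂ := fun n => match n with | 0 => 0 | k + 1 => f k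

@[simp] lemma fsh_zero (f : ℕ → ℂ) : fsh f 0 = 0 := rfl
@[simp] lemma fsh_succ (f : ℕ → ℂ) (k : ℕ) : fsh f (k + 1) = f k := rfl

lemma two_toReal_pos : 0 < (2 : ENNReal).toReal := by norm_num

lemma memℓp_bshift (f : E2) : Memℓp (fun n => f (n + 1)) 2 := by
  apply memℓp_gen
  exact (summable_nat_add_iff 1).2 ((lp.memℓp f).summable two_toReal_pos)

lemma memℓp_fshift (f : E2) : Memℓp (fsh f) 2 := by
  apply memℓp_gen
  rw [← summable_nat_add_iff 1]
  simp only [fsh_succ]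
  exact (lp.memℓp f).summable two_toReal_pos

def bshiftL : E2 →ₗ[ℂ] E2 where
  toFun f := ⟨fun n => f (n + 1), memℓp_bshift f⟩
  map_add' f g := by apply lp.ext; funext n; simp only [lp.coeFn_add, Pi.add_apply]
  map_smul' c f := by apply lp.ext; funext n; simp only [lp.coeFn_smul, Pi.smul_apply]; rfl

def fshiftL : E2 →ₗ[ℂ] E2 where
  toFun f := ⟨fsh f, memℓp_fshift f⟩
  map_add' f g := by
    apply lp.ext; funext n
    show fsh (f + g : E2) n = (⟨fsh f, _⟩ + ⟨fsh g, _⟩ : E2) n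
    cases n with
    | zero => show (0 : ℂ) = 0 + 0; rw [add_zero]
    | succ k => show ((f + g : E2) : ∀ _ : ℕ, ℂ) k = _; simp only [lp.coeFn_add, Pi.add_apply]; rfl
  map_smul' c f := by
    apply lp.ext; funext n
    show fsh (c • f : E2) n = (c • (⟨fsh f, _⟩ : E2) : E2) n
    cases n with
    | zero => show (0 : ℂ) = c • 0; rw [smul_zero]
    | succ k => show ((c • f : E2) : ∀ _ : ℕ, ℂ) k = _; simp only [lp.coeFn_smul, Pi.smul_apply]; rfl

lemma rpow_two_le {x y : ℝ} (hx : 0 ≤ x) (hy : 0 ≤ y)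
    (h : x ^ (2 : ENNReal).toReal ≤ y ^ (2 : ENNReal).toReal) : x ≤ y := by
  rw [show ((2:ENNReal).toReal) = ((2:ℕ):ℝ) by norm_num, Real.rpow_natCast,
    Real.rpow_natCast] at h
  exact (pow_le_pow_iff_left₀ hx hy (by norm_num)).1 h

lemma bshiftL_bound (f : E2) : ‖bshiftL f‖ ≤ 1 * ‖f‖ := by
  rw [one_mul]
  have h2 := two_toReal_pos
  refine rpow_two_le (norm_nonneg _) (norm_nonneg _) ?_
  rw [lp.norm_rpow_eq_tsum h2, lp.norm_rpow_eq_tsum h2]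
  exact Summable.tsum_le_tsum_of_inj (· + 1) (add_left_injective 1)
    (fun c _ => Real.rpow_nonneg (norm_nonneg _) _) (fun n => le_of_eq rfl)
    ((lp.memℓp (bshiftL f)).summable h2) ((lp.memℓp f).summable h2)

lemma fshiftL_bound (f : E2) : ‖fshiftL f‖ ≤ 1 * ‖f‖ := by
  rw [one_mul]
  have h2 := two_toReal_pos
  refine rpow_two_le (norm_nonneg _) (norm_nonneg _) ?_
  rw [lp.norm_rpow_eq_tsum h2, lp.norm_rpow_eq_tsum h2,
    Summable.tsum_eq_zero_add ((lp.memℓp (fshiftL f)).summable h2)]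
  have h0 : ‖(fshiftL f : ∀ _ : ℕ, ℂ) 0‖ ^ (2 : ENNReal).toReal = 0 := by
    show ‖(0 : ℂ)‖ ^ (2 : ENNReal).toReal = 0
    simp [Real.zero_rpow (ne_of_gt h2)]
  rw [h0, zero_add]
  refine le_of_eq (tsum_congr fun k => ?_)
  rfl

def bshift : E2 →L[ℂ] E2 := bshiftL.mkContinuous 1 bshiftL_bound

def fshift : E2 →L[ℂ] E2 := fshiftL.mkContinuous 1 fshiftL_bound

@[simp] lemma bshift_apply (f : E2) (n : ℕ) : (bshift f : ∀ _ : ℕ, ℂ) n = f (n + 1) := rfl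

@[simp] lemma fshift_apply_zero (f : E2) : (fshift f : ∀ _ : ℕ, ℂ) 0 = 0 := rfl

@[simp] lemma fshift_apply_succ (f : E2) (n : ℕ) :
    (fshift f : ∀ _ : ℕ, ℂ) (n + 1) = f n := rfl

lemma bshift_fshift (f : E2) : bshift (fshift f) = f := by
  apply lp.ext; funext n; rfl

lemma inner_fshift_left (f g : E2) :
    inner ℂ (fshift f) g = inner ℂ f (bshift g) := by
  rw [lp.inner_eq_tsum, lp.inner_eq_tsum,
    Summable.tsum_eq_zero_add (G := ℂ) (lp.summable_inner (fshift f) g)]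
  simp only [fshift_apply_zero, fshift_apply_succ, bshift_apply]
  rw [inner_zero_left, zero_add]

end ShiftOps

open Metric Set Function

lemma bounded_below_of_compact_injective
    {E : Type*} [NormedAddCommGroup E] [InnerProductSpace ℂ E] [CompleteSpace E]
    (B : E →L[ℂ] E) (hC : IsCompactOperator ⇑(B - 1)) (hinj : Function.Injective B) :
    ∃ c : ℝ, 0 < c ∧ ∀ x, c * ‖x‖ ≤ ‖B x‖ := by
  by_contra h
  push_neg at h
  have hu : ∀ n : ℕ, ∃ u : E, ‖u‖ = 1 ∧ ‖B u‖ < 1 / (n + 1) := by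
    intro n
    obtain ⟨x, hx⟩ := h (1 / (n + 1)) (by positivity)
    have hx0 : x ≠ 0 := by
      rintro rfl
      simp at hx
    have hxn : ‖x‖ ≠ 0 := norm_ne_zero_iff.2 hx0
    refine ⟨((‖x‖ : ℂ))⁻¹ • x, ?_, ?_⟩
    · rw [norm_smul, norm_inv, Complex.norm_real, norm_norm, inv_mul_cancel₀ hxn]
    · rw [map_smul, norm_smul, norm_inv, Complex.norm_real, norm_norm]
      calc ‖x‖⁻¹ * ‖B x‖ < ‖x‖⁻¹ * (1 / (n+1) * ‖x‖) :=
            mul_lt_mul_of_pos_left hx (by positivity)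
        _ = 1 / (n + 1) := by
            rw [mul_comm (1/((n:ℝ)+1)) ‖x‖, ← mul_assoc, inv_mul_cancel₀ hxn, one_mul]
  choose u hu1 hu2 using hu
  obtain ⟨K, hK, hKsub⟩ := hC.image_closedBall_subset_compact 1
  have hmem : ∀ n, (B - 1) (u n) ∈ K := fun n =>
    hKsub ⟨u n, by simp [hu1 n], rfl⟩
  obtain ⟨y, -, φ, hφ, hy⟩ := hK.tendsto_subseq hmem
  have hBu : Filter.Tendsto (fun n => B (u (φ n))) Filter.atTop (nhds 0) := by
    rw [tendsto_iff_norm_sub_tendsto_zero]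
    refine squeeze_zero (fun n => by positivity) (fun n => ?_)
      tendsto_one_div_add_atTop_nhds_zero_nat
    rw [sub_zero]
    calc ‖B (u (φ n))‖ ≤ 1 / (φ n + 1) := (hu2 (φ n)).le
      _ ≤ 1 / (n + 1) := by
          have h1 : (n : ℝ) ≤ (φ n : ℝ) := by exact_mod_cast hφ.le_apply
          gcongr
  have huy : Filter.Tendsto (fun n => u (φ n)) Filter.atTop (nhds (-y)) := by
    have heq : (fun n => u (φ n)) = fun n => B (u (φ n)) - (B - 1) (u (φ n)) := by
      funext n; simp
    rw [heq]
    simpa using hBu.sub hy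
  have hynorm : ‖-y‖ = 1 := by
    have h1 : Filter.Tendsto (fun n => ‖u (φ n)‖) Filter.atTop (nhds ‖-y‖) := huy.norm
    simp only [hu1] at h1
    exact tendsto_nhds_unique h1 tendsto_const_nhds
  have hBy : B (-y) = 0 := by
    have h2 : Filter.Tendsto (fun n => B (u (φ n))) Filter.atTop (nhds (B (-y))) :=
      (B.continuous.tendsto (-y)).comp huy
    exact tendsto_nhds_unique h2 hBu
  have : (-y) = 0 := hinj (by rw [hBy, map_zero])
  rw [this, norm_zero] at hynorm
  exact one_ne_zero hynorm.symm

lemma surjective_of_compact_injective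
    {E : Type*} [NormedAddCommGroup E] [InnerProductSpace ℂ E] [CompleteSpace E]
    (B : E →L[ℂ] E) (hC : IsCompactOperator ⇑(B - 1)) (hinj : Function.Injective B) :
    Function.Surjective B := by
  by_contra hsurj
  rw [Function.Surjective] at hsurj
  push_neg at hsurj
  obtain ⟨z, hz⟩ := hsurj
  obtain ⟨c, hc, hbb⟩ := bounded_below_of_compact_injective B hC hinj
  -- iterates
  have hpow_apply : ∀ (n : ℕ) (x : E), (B ^ (n + 1)) x = (B ^ n) (B x) := by
    intro n x
    rw [pow_succ, ContinuousLinearMap.mul_apply]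
  have hpow_apply' : ∀ (n : ℕ) (x : E), (B ^ (n + 1)) x = B ((B ^ n) x) := by
    intro n x
    rw [pow_succ', ContinuousLinearMap.mul_apply]
  have hpow_inj : ∀ n : ℕ, Function.Injective ⇑(B ^ n) := by
    intro n
    induction n with
    | zero => simpa using Function.injective_id
    | succ k ih =>
      intro a b hab
      rw [hpow_apply, hpow_apply] at hab
      exact hinj (ih hab)
  have hpow_bound : ∀ (n : ℕ) (x : E), c ^ n * ‖x‖ ≤ ‖(B ^ n) x‖ := by
    intro n
    induction n with
    | zero => intro x; simp
    | succ k ih =>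
      intro x
      rw [hpow_apply, pow_succ]
      calc c ^ k * c * ‖x‖ = c ^ k * (c * ‖x‖) := by ring
        _ ≤ c ^ k * ‖B x‖ := by
            exact mul_le_mul_of_nonneg_left (hbb x) (by positivity)
        _ ≤ ‖(B ^ k) (B x)‖ := ih (B x)
  -- the decreasing chain of closed subspaces
  set V : ℕ → Submodule ℂ E := fun n => LinearMap.range ((B ^ n).toLinearMap) with hV
  have hVclosed : ∀ n, IsClosed (V n : Set E) := by
    intro n
    have hb : ∀ x, ‖x‖ ≤ ((c ^ n)⁻¹).toNNReal * ‖(B ^ n) x‖ := by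
      intro x
      rw [Real.coe_toNNReal _ (by positivity)]
      rw [le_inv_mul_iff₀ (by positivity)]
      exact hpow_bound n x
    have hal := (B ^ n).antilipschitz_of_bound hb
    have := hal.isClosed_range (B ^ n).uniformContinuous
    convert this using 1; exact LinearMap.coe_range _
  have hVsucc : ∀ n, V (n + 1) ≤ V n := by
    intro n x hx
    obtain ⟨y, hy⟩ := hx
    exact ⟨B y, by rw [← hy]; exact (hpow_apply n y).symm⟩
  have hVanti : ∀ {n m : ℕ}, n ≤ m → V m ≤ V n := by
    intro n m h
    exact antitone_nat_of_succ_le hVsucc h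
  have hBmem : ∀ {n : ℕ} {x : E}, x ∈ V n → B x ∈ V (n + 1) := by
    intro n x hx
    obtain ⟨y, hy⟩ := hx
    exact ⟨y, by rw [← hy]; exact hpow_apply' n y⟩
  -- strictness
  have hstrict : ∀ n, (B ^ n) z ∈ V n ∧ (B ^ n) z ∉ V (n + 1) := by
    intro n
    refine ⟨⟨z, rfl⟩, fun hmem => ?_⟩
    obtain ⟨y, hy⟩ := hmem
    rw [ContinuousLinearMap.coe_coe, hpow_apply] at hy
    exact hz y (hpow_inj n hy)
  -- construct the orthonormal-ish separated sequence
  have hx : ∀ n : ℕ, ∃ x : E, x ∈ V n ∧ ‖x‖ = 1 ∧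
      ∀ w ∈ V (n + 1), inner ℂ x w = 0 := by
    intro n
    haveI : CompleteSpace (V (n + 1)) := (hVclosed (n + 1)).completeSpace_coe
    set zn := (B ^ n) z with hzn
    set p := zn - ((V (n + 1)).orthogonalProjectionOnto zn : E) with hp
    have hp0 : p ≠ 0 := by
      intro h0
      have : zn = ((V (n + 1)).orthogonalProjectionOnto zn : E) := by
        rwa [sub_eq_zero] at h0
      have hm : zn ∈ V (n + 1) := by rw [this]; exact Submodule.coe_mem _
      exact (hstrict n).2 hm
    have hpn : ‖p‖ ≠ 0 := norm_ne_zero_iff.2 hp0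
    have hpV : p ∈ V n := by
      refine Submodule.sub_mem _ (hstrict n).1 (hVsucc n ?_)
      exact ((V (n + 1)).orthogonalProjectionOnto zn).2
    refine ⟨((‖p‖ : ℂ))⁻¹ • p, Submodule.smul_mem _ _ hpV, ?_, ?_⟩
    · rw [norm_smul, norm_inv, Complex.norm_real, norm_norm, inv_mul_cancel₀ hpn]
    · intro w hw
      rw [inner_smul_left]
      rw [show inner ℂ p w = 0 from Submodule.starProjection_inner_eq_zero (K := V (n + 1)) zn w hw, mul_zero]
  choose x hxV hx1 hxO using hx
  -- separation
  have hsep : ∀ n m : ℕ, n < m → 1 ≤ ‖(B - 1) (x n) - (B - 1) (x m)‖ := by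
    intro n m hnm
    set v := B (x n) - B (x m) + x m with hv
    have hvV : v ∈ V (n + 1) := by
      refine Submodule.add_mem _ (Submodule.sub_mem _ (hBmem (hxV n)) ?_) ?_
      · exact hVanti (by omega) (hBmem (hxV m))
      · exact hVanti (by omega) (hxV m)
    have heq : (B - 1) (x n) - (B - 1) (x m) = v - x n := by
      simp only [ContinuousLinearMap.sub_apply, ContinuousLinearMap.one_apply, hv]
      abel
    have hinner : inner ℂ (x n) (x n - v) = 1 := by
      rw [inner_sub_right, hxO n v hvV, sub_zero, inner_self_eq_norm_sq_to_K, hx1 n]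
      norm_num
    have h1 : (1 : ℝ) ≤ ‖x n - v‖ := by
      have := norm_inner_le_norm (𝕜 := ℂ) (x n) (x n - v)
      rw [hinner, hx1 n, one_mul] at this
      simpa using this
    rw [heq, norm_sub_rev]
    exact h1
  -- compactness contradiction
  obtain ⟨K, hK, hKsub⟩ := hC.image_closedBall_subset_compact 1
  have hmem : ∀ n, (B - 1) (x n) ∈ K := fun n =>
    hKsub ⟨x n, by simp [hx1 n], rfl⟩
  obtain ⟨l, -, φ, hφ, hconv⟩ := hK.tendsto_subseq hmem
  have hcauchy : CauchySeq fun n => (B - 1) (x (φ n)) := hconv.cauchySeq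
  obtain ⟨N, hN⟩ := (Metric.cauchySeq_iff.1 hcauchy) 1 one_pos
  have hlt := hN N le_rfl (N + 1) (by omega)
  rw [dist_eq_norm] at hlt
  have hge := hsep (φ N) (φ (N + 1)) (hφ (by omega))
  linarith

open Metric Set

lemma exists_isometry_l2 (H : Type*) [NormedAddCommGroup H] [InnerProductSpace ℂ H]
    [CompleteSpace H] [TopologicalSpace.SeparableSpace H] (hinf : ¬ FiniteDimensional ℂ H) :
    Nonempty (H ≃ₗᵢ[ℂ] lp (fun _ : ℕ => ℂ) 2) := by
  obtain ⟨w, b0, hb0⟩ := exists_hilbertBasis ℂ H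
  have hON : Orthonormal ℂ ((↑) : w → H) := hb0 ▸ b0.orthonormal
  -- countability
  have hcount : w.Countable := by
    refine Set.PairwiseDisjoint.countable_of_isOpen
      (s := fun x : H => Metric.ball x (1/2)) ?_ (fun x _ => isOpen_ball)
      (fun x _ => ⟨x, mem_ball_self (by norm_num)⟩)
    intro x hx y hy hxy
    refine Metric.ball_disjoint_ball ?_
    rw [dist_eq_norm]
    have h1 : ‖x‖ = 1 := hON.1 ⟨x, hx⟩
    have h2 : ‖y‖ = 1 := hON.1 ⟨y, hy⟩
    have h0 : inner ℂ x y = 0 := hON.2 (by simp [Subtype.ext_iff, hxy] :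
      (⟨x, hx⟩ : w) ≠ ⟨y, hy⟩)
    have hsq : ‖x - y‖ ^ 2 = 2 := by
      rw [norm_sub_sq (𝕜 := ℂ), h0, h1, h2]
      norm_num
    nlinarith [norm_nonneg (x - y)]
  -- infiniteness
  have hinfW : w.Infinite := by
    by_contra hfin'
    rw [Set.not_infinite] at hfin'
    have hfin := hfin'
    apply hinf
    haveI := hfin.fintype
    let J : lp (fun _ : w => ℂ) 2 →ₗ[ℂ] (w → ℂ) :=
      { toFun := fun f => ⇑f
        map_add' := fun f g => lp.coeFn_add f g
        map_smul' := fun c f => lp.coeFn_smul c f }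
    have hJinj : Function.Injective J := fun f g h => lp.ext h
    haveI : FiniteDimensional ℂ (lp (fun _ : w => ℂ) 2) :=
      FiniteDimensional.of_injective J hJinj
    exact (b0.repr.toLinearEquiv.symm : lp (fun _ : w => ℂ) 2 ≃ₗ[ℂ] H).finiteDimensional
  haveI := hcount.to_subtype
  haveI := hinfW.to_subtype
  obtain ⟨d⟩ : Nonempty (Denumerable w) :=
    nonempty_denumerable_iff.2 ⟨inferInstance, inferInstance⟩
  let e : w ≃ ℕ := Denumerable.eqv w
  have hONv : Orthonormal ℂ (⇑b0 ∘ e.symm) := b0.orthonormal.comp e.symm e.symm.injective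
  have hsp : ⊤ ≤ (Submodule.span ℂ (Set.range (⇑b0 ∘ e.symm))).topologicalClosure := by
    rw [e.symm.surjective.range_comp]
    exact b0.dense_span.ge
  exact ⟨(HilbertBasis.mk hONv hsp).repr⟩

lemma matrix_no_char (n : ℕ) (hn : 2 ≤ n) :
    IsEmpty (Matrix (Fin n) (Fin n) ℂ →⋆ₐ[ℂ] ℂ) := by
  constructor
  intro φ
  haveI : NeZero n := ⟨by omega⟩
  set i0 : Fin n := ⟨0, by omega⟩ with hi0
  set z : ℂ := φ (Matrix.single i0 i0 1) with hz
  have hdiag : ∀ i : Fin n, φ (Matrix.single i i 1) = z := by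
    intro i
    have h1 : Matrix.single i i0 (1:ℂ) * Matrix.single i0 i 1 =
        Matrix.single i i 1 := by
      rw [Matrix.single_mul_single_same, one_mul]
    have h2 : Matrix.single i0 i (1:ℂ) * Matrix.single i i0 1 =
        Matrix.single i0 i0 1 := by
      rw [Matrix.single_mul_single_same, one_mul]
    rw [← h1, map_mul, mul_comm, ← map_mul, h2]
  have hsum : (∑ i : Fin n, Matrix.single i i (1:ℂ)) = 1 := by
    ext a b
    rw [Matrix.sum_apply]
    by_cases hab : a = b
    · subst hab
      rw [Matrix.one_apply_eq]
      rw [Finset.sum_eq_single a]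
      · simp [Matrix.single]
      · intro i _ hia
        simp [Matrix.single, hia]
      · simp
    · rw [Matrix.one_apply_ne hab]
      apply Finset.sum_eq_zero
      intro i _
      simp only [Matrix.single, Matrix.of_apply]
      rw [if_neg]
      rintro ⟨rfl, rfl⟩
      exact hab rfl
  have hone : (1 : ℂ) = n * z := by
    have := congrArg φ hsum
    rw [map_one, map_sum] at this
    simp only [hdiag] at this
    rw [Finset.sum_const, Finset.card_univ, Fintype.card_fin] at this
    rw [← this, nsmul_eq_mul]
  have hidem : z * z = z := by
    rw [hz, ← map_mul, Matrix.single_mul_single_same, one_mul]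
  have hz01 : z = 0 ∨ z = 1 := by
    have h' : z * (z - 1) = 0 := by rw [mul_sub, hidem, mul_one, sub_self]
    rcases mul_eq_zero.mp h' with h | h
    · exact Or.inl h
    · exact Or.inr (by linear_combination h)
  rcases hz01 with h | h
  · rw [h, mul_zero] at hone
    exact one_ne_zero hone
  · rw [h, mul_one] at hone
    have : (n : ℂ) = ((1 : ℕ) : ℂ) := by rw [← hone]; norm_num
    have := Nat.cast_inj.mp this
    omega

section MainA

variable {H : Type*} [NormedAddCommGroup H] [InnerProductSpace ℂ H] [CompleteSpace H]

local notation "E2" => lp (fun _ : ℕ => ℂ) 2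

lemma compact_of_dom_complex {F : Type*} [NormedAddCommGroup F] [NormedSpace ℂ F]
    (g : ℂ →L[ℂ] F) : IsCompactOperator ⇑g :=
  ⟨g '' Metric.closedBall 0 1, (isCompact_closedBall 0 1).image g.continuous,
    Filter.mem_of_superset (Metric.closedBall_mem_nhds 0 one_pos)
      (Set.subset_preimage_image ⇑g (Metric.closedBall 0 1))⟩

lemma fshift_bshift (f : E2) : fshift (bshift f) = f - lp.single 2 0 (f 0) := by
  apply lp.ext
  funext n
  simp only [lp.coeFn_sub, Pi.sub_apply]
  cases n with
  | zero =>
    rw [fshift_apply_zero, lp.single_apply]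
    simp
  | succ k =>
    rw [fshift_apply_succ, bshift_apply, lp.single_apply]
    have h : (k + 1 : ℕ) ≠ 0 := by omega
    rw [Pi.single_eq_of_ne h, sub_zero]

lemma single_eq_smul (c : ℂ) : lp.single (E := fun _ : ℕ => ℂ) 2 0 c = c • lp.single 2 0 1 := by
  apply lp.ext
  funext n
  rw [lp.coeFn_smul, Pi.smul_apply, lp.single_apply, lp.single_apply]
  by_cases h : n = 0
  · rw [h, Pi.single_eq_same, Pi.single_eq_same]
    subst h
    simp
  · rw [Pi.single_eq_of_ne h, Pi.single_eq_of_ne h, smul_zero]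

theorem partA (L : H ≃ₗᵢ[ℂ] E2) :
    ∃ T : H →L[ℂ] H, IsCompactOperator ⇑(star T * T - 1) ∧
      ∀ S : H →L[ℂ] H, IsCompactOperator ⇑(T - S) → star S * S ≠ 1 := by
  classical
  set Lc : H →L[ℂ] E2 := (L.toContinuousLinearEquiv : H →L[ℂ] E2) with hLc
  set Mc : E2 →L[ℂ] H := (L.symm.toContinuousLinearEquiv : E2 →L[ℂ] H) with hMc
  set T : H →L[ℂ] H := Mc ∘L (bshift ∘L Lc) with hT
  set W : H →L[ℂ] H := Mc ∘L (fshift ∘L Lc) with hW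
  have hT_apply : ∀ x : H, T x = L.symm (bshift (L x)) := fun _ => rfl
  have hW_apply : ∀ x : H, W x = L.symm (fshift (L x)) := fun _ => rfl
  have hTW : ∀ x : H, T (W x) = x := by
    intro x
    rw [hT_apply, hW_apply, L.apply_symm_apply, bshift_fshift, L.symm_apply_apply]
  have hstarT : star T = W := by
    rw [ContinuousLinearMap.star_eq_adjoint]
    refine ((ContinuousLinearMap.eq_adjoint_iff W T).2 fun x y => ?_).symm
    rw [hW_apply, hT_apply]
    calc inner ℂ (L.symm (fshift (L x))) y
        = inner ℂ (fshift (L x)) (L y) := by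
          rw [← L.symm.inner_map_map (fshift (L x)) (L y), L.symm_apply_apply]
      _ = inner ℂ (L x) (bshift (L y)) := inner_fshift_left _ _
      _ = inner ℂ x (L.symm (bshift (L y))) := by
          rw [← L.symm.inner_map_map (L x) (bshift (L y)), L.symm_apply_apply]
  set e0 : H := L.symm (lp.single 2 0 1) with he0
  have hinner_e0 : ∀ x : H, inner ℂ e0 x = (L x) 0 := by
    intro x
    have h := L.symm.inner_map_map (lp.single 2 0 1) (L x)
    rw [L.symm_apply_apply] at h
    rw [he0, h, lp.inner_single_left]
    simp
  have hfun : ⇑(star T * T - 1) = (⇑(ContinuousLinearMap.toSpanSingleton ℂ (-e0))) ∘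
      ⇑(innerSL ℂ e0) := by
    funext x
    have h1 : (star T * T - 1) x = W (T x) - x := by
      rw [ContinuousLinearMap.sub_apply, ContinuousLinearMap.one_apply,
        ContinuousLinearMap.mul_apply, hstarT]
    rw [h1, hW_apply, hT_apply, L.apply_symm_apply, fshift_bshift, map_sub,
      L.symm_apply_apply, single_eq_smul, map_smul]
    simp only [Function.comp_apply, ContinuousLinearMap.toSpanSingleton_apply,
      innerSL_apply_apply, hinner_e0]
    rw [smul_neg]
    abel
  refine ⟨T, ?_, ?_⟩
  · rw [hfun]
    exact (compact_of_dom_complex _).comp_clm (innerSL ℂ e0)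
  intro S hK hS
  have hSin : ∀ x : H, inner ℂ x x = inner ℂ (S x) (S x) := by
    intro x
    have h1 : (star S * S) x = x := by rw [hS, ContinuousLinearMap.one_apply]
    calc inner ℂ x x = inner ℂ ((star S * S) x) x := by rw [h1]
      _ = inner ℂ (S x) (S x) := by
          rw [ContinuousLinearMap.mul_apply, ContinuousLinearMap.star_eq_adjoint,
            ContinuousLinearMap.adjoint_inner_left]
  have hSinj : Function.Injective S := by
    intro a b hab
    have h0 : S (a - b) = 0 := by rw [map_sub, hab, sub_self]
    have h2 := hSin (a - b)
    rw [h0, inner_zero_left] at h2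
    exact sub_eq_zero.1 (inner_self_eq_zero.1 h2)
  set B : H →L[ℂ] H := S ∘L W with hB
  have hBinj : Function.Injective B := by
    intro a b hab
    have h1 : W a = W b := hSinj hab
    have h2 : a = T (W a) := (hTW a).symm
    rw [h2, h1, hTW b]
  have hBC : IsCompactOperator ⇑(B - 1) := by
    have hST : IsCompactOperator ⇑(S - T) := by
      have hcoe : ⇑(S - T) = -⇑(T - S) := by
        funext x
        simp [ContinuousLinearMap.sub_apply, neg_sub]
      rw [hcoe]
      exact hK.neg
    have hfunB : ⇑(B - 1) = ⇑(S - T) ∘ ⇑W := by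
      funext x
      show S (W x) - x = S (W x) - T (W x)
      rw [hTW x]
    rw [hfunB]
    exact hST.comp_clm W
  have hBsurj := surjective_of_compact_injective B hBC hBinj
  obtain ⟨x, hx⟩ := hBsurj (S e0)
  have hWx : W x = e0 := hSinj hx
  have h1 : (L e0) 0 = 1 := by
    rw [he0, L.apply_symm_apply, lp.single_apply]
    simp
  have h2 : (L (W x)) 0 = 0 := by
    rw [hW_apply, L.apply_symm_apply, fshift_apply_zero]
  rw [hWx, h1] at h2
  exact one_ne_zero h2

end MainA



/-- Proposition 4.16. (a) On an infinite-dimensional separable Hilbert space `H`, there is an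
isometry of the Calkin algebra that does not lift to an isometry of `B(H)`: an operator `T`
with `1 - T*T` compact (so its image in the Calkin algebra is an isometry) such that no
compact perturbation `S` of `T` satisfies `S*S = 1`; consequently the Toeplitz algebra is
not W*-C*-projective. (b) For `n ≥ 2`, `Mₙ(ℂ)` admits no unital *-homomorphism to `ℂ`, and
the identity of `Mₙ(ℂ)` does not lift through the surjection `Mₙ(ℂ) ⊕ ℂ → Mₙ(ℂ)`; hence
`Mₙ(ℂ)` is not (unitally) W*-C*-projective. -/
theorem toeplitz_and_matrices_not_WstarCstar_projective
    (H : Type*) [NormedAddCommGroup H] [InnerProductSpace ℂ H] [CompleteSpace H]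
    [TopologicalSpace.SeparableSpace H] (hinf : ¬ FiniteDimensional ℂ H)
    (n : ℕ) (hn : 2 ≤ n) :
    (∃ T : H →L[ℂ] H, IsCompactOperator ⇑(star T * T - 1) ∧
      ∀ S : H →L[ℂ] H, IsCompactOperator ⇑(T - S) → star S * S ≠ 1) ∧
    IsEmpty (Matrix (Fin n) (Fin n) ℂ →⋆ₐ[ℂ] ℂ) ∧
    ¬ ∃ ψ : Matrix (Fin n) (Fin n) ℂ →⋆ₐ[ℂ] (Matrix (Fin n) (Fin n) ℂ × ℂ),
        (StarAlgHom.fst ℂ (Matrix (Fin n) (Fin n) ℂ) ℂ).comp ψ =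
          StarAlgHom.id ℂ (Matrix (Fin n) (Fin n) ℂ) := by
  
  obtain ⟨L⟩ := exists_isometry_l2 H hinf
  refine ⟨partA L, matrix_no_char n hn, ?_⟩
  rintro ⟨ψ, hψ⟩
  exact (matrix_no_char n hn).false ((StarAlgHom.snd ℂ (Matrix (Fin n) (Fin n) ℂ) ℂ).comp ψ)
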